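/- Let q ∈ ℂ with q ≠ 0 and q² ≠ 1, set ω = q − q⁻¹, let m ≥ 1, let μ₁, …, μ_m ∈ ℂ, and fix 1 ≤ k ≤ m. For any tuple ν = (ν₁, …, ν_m) define T(X; ν) := −ω⁻¹ · (∏_{i=1}^{m} (1 − ν_i X) · (∏_{i=1}^{m} (1 − q⁻² ν_i X))⁻¹ − 1) ∈ ℂ[[X]], and let S_k(X) := μ_k X · ((1 − μ_k X)⁻¹)² ∈ ℂ[[X]]. Let μ″ be the tuple obtained from μ by replacing μ_k with q² μ_k. Then in ℂ[[X]]: T(X; μ″) − ω S_k(X) = T(X; μ) · (1 − ω² S_k(X)). -/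

import Mathlib

open Finset PowerSeries

/-- the shift identity `T(X; μ″) − ωS_k(X) = T(X; μ)·(1 − ω²S_k(X))`, where
`μ″` replaces `μ_k` by `q²μ_k` and `S_k(X) = z/(1−z)²` at `z = μ_k X`. -/
theorem stmt_10 (q : ℂ) (hq : q ≠ 0) (hq2 : q ^ 2 ≠ 1) (ω : ℂ) (hω : ω = q - q⁻¹)
    (m : ℕ) (hm : 1 ≤ m) (μ : Fin m → ℂ) (k : Fin m)
    (T : (Fin m → ℂ) → PowerSeries ℂ)
    (hT : ∀ ν : Fin m → ℂ, T ν = -C ω⁻¹ *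
      ((∏ i, (1 - C (ν i) * X)) * (∏ i, (1 - C (q⁻¹ ^ 2 * ν i) * X))⁻¹ - 1))
    (S : PowerSeries ℂ)
    (hS : S = C (μ k) * X * ((1 - C (μ k) * X)⁻¹) ^ 2) :
    T (Function.update μ k (q ^ 2 * μ k)) - C ω * S
      = T μ * (1 - C (ω ^ 2) * S) := by
  have hω0 : ω ≠ 0 := by
    rw [hω, sub_ne_zero]
    intro h
    exact hq2 (by rw [sq]; nth_rewrite 2 [h]; exact mul_inv_cancel₀ hq)
  set z : PowerSeries ℂ := C (μ k) * X with hzdef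
  set f1 : PowerSeries ℂ := 1 - z with hf1def
  set f2 : PowerSeries ℂ := 1 - C (q ^ 2 * μ k) * X with hf2def
  set f3 : PowerSeries ℂ := 1 - C (q⁻¹ ^ 2 * μ k) * X with hf3def
  set A' : PowerSeries ℂ := ∏ i ∈ univ.erase k, (1 - C (μ i) * X) with hA'def
  set B' : PowerSeries ℂ := ∏ i ∈ univ.erase k, (1 - C (q⁻¹ ^ 2 * μ i) * X) with hB'def
  -- product decompositions
  have hA2 : (∏ i, (1 - C (Function.update μ k (q ^ 2 * μ k) i) * X)) = f2 * A' := by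
    rw [← Finset.mul_prod_erase _ _ (mem_univ k), Function.update_self]
    congr 1
    refine Finset.prod_congr rfl fun i hi => ?_
    rw [Function.update_of_ne (Finset.ne_of_mem_erase hi)]
  have hA1 : (∏ i, (1 - C (μ i) * X)) = f1 * A' :=
    (Finset.mul_prod_erase _ _ (mem_univ k)).symm
  have hB2 : (∏ i, (1 - C (q⁻¹ ^ 2 * Function.update μ k (q ^ 2 * μ k) i) * X))
      = f1 * B' := by
    rw [← Finset.mul_prod_erase _ _ (mem_univ k), Function.update_self]
    have : q⁻¹ ^ 2 * (q ^ 2 * μ k) = μ k := by field_simp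
    rw [this]
    congr 1
    refine Finset.prod_congr rfl fun i hi => ?_
    rw [Function.update_of_ne (Finset.ne_of_mem_erase hi)]
  have hB1 : (∏ i, (1 - C (q⁻¹ ^ 2 * μ i) * X)) = f3 * B' :=
    (Finset.mul_prod_erase _ _ (mem_univ k)).symm
  -- constant coefficients
  have c1 : constantCoeff f1 ≠ 0 := by simp [hf1def, hzdef]
  have c3 : constantCoeff f3 ≠ 0 := by simp [hf3def]
  have cB : constantCoeff B' ≠ 0 := by
    rw [hB'def, map_prod]
    refine Finset.prod_ne_zero_iff.mpr fun i _ => ?_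
    simp
  have e1 : f1 * f1⁻¹ = 1 := PowerSeries.mul_inv_cancel _ c1
  have e3 : f3 * f3⁻¹ = 1 := PowerSeries.mul_inv_cancel _ c3
  have eB : B' * B'⁻¹ = 1 := PowerSeries.mul_inv_cancel _ cB
  -- the quadratic identity
  have s1 : q ^ 2 * μ k + q⁻¹ ^ 2 * μ k = 2 * μ k + ω ^ 2 * μ k := by
    rw [hω]; field_simp; ring
  have s2 : (q ^ 2 * μ k) * (q⁻¹ ^ 2 * μ k) = μ k * μ k := by field_simp
  have e1' := congrArg (C (R := ℂ)) s1
  have e2' := congrArg (C (R := ℂ)) s2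
  simp only [map_add, map_mul, map_pow, map_ofNat] at e1' e2'
  have h23 : f2 * f3 = f1 ^ 2 - C (ω ^ 2) * z := by
    rw [hf1def, hf2def, hf3def, hzdef]
    simp only [map_mul, map_pow]
    linear_combination (X * X) * e2' - X * e1'
  -- the key identity
  have expand : 1 - C (ω ^ 2) * (z * f1⁻¹ ^ 2) = (f2 * f3) * f1⁻¹ ^ 2 := by
    linear_combination (-f1⁻¹ ^ 2) * h23 - (f1 * f1⁻¹ + 1) * e1
  have key : f2 * A' * (f1⁻¹ * B'⁻¹)
      = (f1 * A' * (f3⁻¹ * B'⁻¹)) * (1 - C (ω ^ 2) * (z * f1⁻¹ ^ 2)) := by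
    rw [expand]
    linear_combination (-(f2 * A' * B'⁻¹ * f1⁻¹)) * e1
      + (-(f2 * A' * B'⁻¹ * f1⁻¹ * f1 * f1⁻¹)) * e3
  have hww : C ω⁻¹ * C (ω ^ 2) = C ω := by
    rw [← map_mul]
    congr 1
    field_simp
  rw [hT, hT, hS, hA2, hB2, hA1, hB1, PowerSeries.mul_inv_rev, PowerSeries.mul_inv_rev]
  rw [show B'⁻¹ * f1⁻¹ = f1⁻¹ * B'⁻¹ from mul_comm _ _,
      show B'⁻¹ * f3⁻¹ = f3⁻¹ * B'⁻¹ from mul_comm _ _]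
  linear_combination (-(C ω⁻¹)) * key + (z * f1⁻¹ ^ 2) * hww
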